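/- Let H̃ : Ω → 𝒳^T be a random variable such that I[H_T ; H̃ | θ] = 0 and the pair (θ, H̃) has the same joint distribution as (θ, H_T) (a conditionally independent copy of the history given θ). Then I[H_T ; θ | H̃] ≤ I[H_T ; θ] and I[θ ; H̃] = I[θ ; H_T]. Consequently, for every ε ≥ 0 with I[H_T ; θ] < εT, the compression θ̃ := H̃ satisfies the distortion constraint I[H_T ; θ | θ̃] ≤ εT while having rate I[θ ; θ̃] ≤ I[H_T ; θ]; this yields the lower bound min{𝕀_{ε,T}(θ), εT} ≤ I[H_T ; θ] where 𝕀_{ε,T}(θ) is the infimum of I[θ;θ̃] over compressions θ̃ meeting the constraints of the previous sentence. (Paper: lower bound of Theorem 'rate-distortion estimation error bound' for sequential learning.) -/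

import Mathlib

open MeasureTheory ProbabilityTheory Real

variable {Ω : Type*} [MeasureSpace Ω]

noncomputable def prob {𝒳 : Type*} (X : Ω → 𝒳) (x : 𝒳) : ℝ :=
  (ℙ (X ⁻¹' {x})).toReal

noncomputable def entropy {𝒳 : Type*} [Fintype 𝒳] (X : Ω → 𝒳) : ℝ :=
  -∑ x, prob X x * Real.log (prob X x)

noncomputable def condEntropy {𝒳 𝒴 : Type*} [Fintype 𝒳] [Fintype 𝒴]
    (X : Ω → 𝒳) (Y : Ω → 𝒴) : ℝ :=
  entropy (fun ω => (X ω, Y ω)) - entropy Y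

noncomputable def mutualInfo {𝒳 𝒴 : Type*} [Fintype 𝒳] [Fintype 𝒴]
    (X : Ω → 𝒳) (Y : Ω → 𝒴) : ℝ :=
  entropy X + entropy Y - entropy (fun ω => (X ω, Y ω))

noncomputable def condMutualInfo {𝒳 𝒴 𝒵 : Type*} [Fintype 𝒳] [Fintype 𝒴] [Fintype 𝒵]
    (X : Ω → 𝒳) (Y : Ω → 𝒴) (Z : Ω → 𝒵) : ℝ :=
  entropy (fun ω => (X ω, Z ω)) + entropy (fun ω => (Y ω, Z ω))
    - entropy (fun ω => (X ω, Y ω, Z ω)) - entropy Z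

def hist {𝒳 : Type*} {T : ℕ} (X : Fin T → Ω → 𝒳) (t : ℕ) (ht : t ≤ T) : Ω → (Fin t → 𝒳) :=
  fun ω i => X (Fin.castLE ht i) ω


section Aux

variable {𝒳 𝒴 : Type*} [Fintype 𝒳] [Fintype 𝒴]

lemma prob_nonneg (X : Ω → 𝒳) (x : 𝒳) : 0 ≤ prob X x := ENNReal.toReal_nonneg

lemma entropy_comp_equiv (e : 𝒳 ≃ 𝒴) (X : Ω → 𝒳) :
    entropy (fun ω => e (X ω)) = entropy X := by
  have hp : ∀ y, prob (fun ω => e (X ω)) y = prob X (e.symm y) := by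
    intro y
    unfold prob
    congr 1
    apply congrArg
    ext ω
    simp [Set.mem_preimage, Equiv.eq_symm_apply, eq_comm]
  unfold entropy
  simp only [hp]
  exact congrArg Neg.neg (Equiv.sum_comp e.symm fun x => prob X x * Real.log (prob X x))

lemma entropy_identDistrib [MeasurableSpace 𝒳] [MeasurableSingletonClass 𝒳]
    {X Y : Ω → 𝒳} (h : IdentDistrib X Y ℙ ℙ) : entropy X = entropy Y := by
  have hp : ∀ x, prob X x = prob Y x := by
    intro x
    unfold prob
    rw [← Measure.map_apply_of_aemeasurable h.aemeasurable_fst (measurableSet_singleton x),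
      ← Measure.map_apply_of_aemeasurable h.aemeasurable_snd (measurableSet_singleton x),
      h.map_eq]
  unfold entropy
  simp only [hp]

variable [IsProbabilityMeasure (ℙ : Measure Ω)]
variable [MeasurableSpace 𝒳] [MeasurableSingletonClass 𝒳]
variable [MeasurableSpace 𝒴] [MeasurableSingletonClass 𝒴]

lemma sum_prob_eq_one {X : Ω → 𝒳} (hX : Measurable X) : ∑ x, prob X x = 1 := by
  have h := sum_measure_preimage_singleton (μ := (ℙ : Measure Ω)) (Finset.univ : Finset 𝒳)
    (fun y _ => hX (measurableSet_singleton y))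
  simp only [Finset.coe_univ, Set.preimage_univ, measure_univ] at h
  unfold prob
  rw [← ENNReal.toReal_sum (fun a _ => measure_ne_top _ _), h, ENNReal.toReal_one]

lemma prob_fst {X : Ω → 𝒳} {Y : Ω → 𝒴} (hX : Measurable X) (hY : Measurable Y) (x : 𝒳) :
    prob X x = ∑ y, prob (fun ω => (X ω, Y ω)) (x, y) := by
  have hpre : ∀ y : 𝒴, (fun ω => (X ω, Y ω)) ⁻¹' {(x, y)} = X ⁻¹' {x} ∩ Y ⁻¹' {y} := by
    intro y; ext ω; simp [Prod.ext_iff]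
  have hm : ∀ b : 𝒳 × 𝒴, b ∈ ({x} ×ˢ Finset.univ : Finset (𝒳 × 𝒴)) →
      MeasurableSet ((fun ω => (X ω, Y ω)) ⁻¹' {b}) := by
    rintro ⟨a, b⟩ _
    rw [show (fun ω => (X ω, Y ω)) ⁻¹' {(a, b)} = X ⁻¹' {a} ∩ Y ⁻¹' {b} by
      ext ω; simp [Prod.ext_iff]]
    exact (hX (measurableSet_singleton a)).inter (hY (measurableSet_singleton b))
  have h := sum_measure_preimage_singleton (μ := (ℙ : Measure Ω))
    ({x} ×ˢ Finset.univ : Finset (𝒳 × 𝒴)) hm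
  have hset : ((({x} ×ˢ Finset.univ : Finset (𝒳 × 𝒴)) : Set (𝒳 × 𝒴))) =
      {x} ×ˢ (Set.univ : Set 𝒴) := by
    ext ⟨a, b⟩; simp [eq_comm]
  rw [hset] at h
  have hset2 : (fun ω => (X ω, Y ω)) ⁻¹' ({x} ×ˢ (Set.univ : Set 𝒴)) = X ⁻¹' {x} := by
    ext ω; simp [eq_comm]
  rw [hset2] at h
  rw [Finset.sum_product, Finset.sum_singleton] at h
  unfold prob
  rw [← h, ENNReal.toReal_sum (fun a _ => measure_ne_top _ _)]

lemma prob_snd {X : Ω → 𝒳} {Y : Ω → 𝒴} (hX : Measurable X) (hY : Measurable Y) (y : 𝒴) :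
    prob Y y = ∑ x, prob (fun ω => (X ω, Y ω)) (x, y) := by
  have h := prob_fst hY hX y
  have hswap : ∀ x : 𝒳, prob (fun ω => (Y ω, X ω)) (y, x) = prob (fun ω => (X ω, Y ω)) (x, y) := by
    intro x
    unfold prob
    congr 1
    apply congrArg
    ext ω; simp [Prod.ext_iff, and_comm]
  rw [h]
  exact Finset.sum_congr rfl fun x _ => hswap x

lemma mutualInfo_nonneg' {X : Ω → 𝒳} {Y : Ω → 𝒴} (hX : Measurable X) (hY : Measurable Y) :
    entropy (fun ω => (X ω, Y ω)) ≤ entropy X + entropy Y := by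
  set p : 𝒳 → 𝒴 → ℝ := fun x y => prob (fun ω => (X ω, Y ω)) (x, y) with hp
  have hpnn : ∀ x y, 0 ≤ p x y := fun x y => prob_nonneg _ _
  have hqx : ∀ x, prob X x = ∑ y, p x y := fun x => prob_fst hX hY x
  have hqy : ∀ y, prob Y y = ∑ x, p x y := fun y => prob_snd hX hY y
  have hsum1 : ∑ x, ∑ y, p x y = 1 := by
    rw [← Fintype.sum_prod_type]
    exact sum_prob_eq_one (hX.prodMk hY)
  have hqxnn : ∀ x, 0 ≤ prob X x := fun x => prob_nonneg _ _
  have hqynn : ∀ y, 0 ≤ prob Y y := fun y => prob_nonneg _ _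
  have hple : ∀ x y, p x y ≤ prob X x := by
    intro x y
    rw [hqx]
    exact Finset.single_le_sum (fun y _ => hpnn x y) (Finset.mem_univ y)
  have hple' : ∀ x y, p x y ≤ prob Y y := by
    intro x y
    rw [hqy]
    exact Finset.single_le_sum (fun x _ => hpnn x y) (Finset.mem_univ x)
  -- entropy rewriting
  have hEX : entropy X = -∑ x, ∑ y, p x y * Real.log (prob X x) := by
    unfold entropy
    congr 1
    refine Finset.sum_congr rfl fun x _ => ?_
    rw [hqx, Finset.sum_mul]
  have hEY : entropy Y = -∑ x, ∑ y, p x y * Real.log (prob Y y) := by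
    unfold entropy
    rw [Finset.sum_comm]
    congr 1
    refine Finset.sum_congr rfl fun y _ => ?_
    rw [hqy, Finset.sum_mul]
  have hEXY : entropy (fun ω => (X ω, Y ω)) = -∑ x, ∑ y, p x y * Real.log (p x y) := by
    unfold entropy
    rw [Fintype.sum_prod_type]
  rw [hEX, hEY, hEXY]
  have key : ∀ x y, p x y - prob X x * prob Y y ≤
      p x y * (Real.log (p x y) - Real.log (prob X x) - Real.log (prob Y y)) := by
    intro x y
    rcases eq_or_lt_of_le (hpnn x y) with h0 | h0
    · rw [← h0]
      nlinarith [mul_nonneg (hqxnn x) (hqynn y)]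
    · have hx0 : 0 < prob X x := lt_of_lt_of_le h0 (hple x y)
      have hy0 : 0 < prob Y y := lt_of_lt_of_le h0 (hple' x y)
      have ht : (0:ℝ) < prob X x * prob Y y / p x y := by positivity
      have hlog := Real.log_le_sub_one_of_pos ht
      rw [Real.log_div (by positivity) (ne_of_gt h0), Real.log_mul (ne_of_gt hx0) (ne_of_gt hy0)]
        at hlog
      have h2 := mul_le_mul_of_nonneg_left hlog (le_of_lt h0)
      have h3 : p x y * (prob X x * prob Y y / p x y) = prob X x * prob Y y :=
        mul_div_cancel₀ _ (ne_of_gt h0)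
      nlinarith [h2, h3]
  have hsum := Finset.sum_le_sum (fun x (_ : x ∈ Finset.univ) =>
    Finset.sum_le_sum (fun y (_ : y ∈ Finset.univ) => key x y))
  have hprod : ∑ x, ∑ y, (p x y - prob X x * prob Y y) = 0 := by
    have : ∑ x, ∑ y, prob X x * prob Y y = (∑ x, prob X x) * (∑ y, prob Y y) := by
      rw [Finset.sum_mul_sum]
    simp only [Finset.sum_sub_distrib]
    rw [this, hsum1, sum_prob_eq_one hX, sum_prob_eq_one hY]
    ring
  have : (0:ℝ) ≤ ∑ x, ∑ y, p x y * (Real.log (p x y) - Real.log (prob X x) - Real.log (prob Y y)) := by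
    rw [← hprod]; exact hsum
  have hexp : ∑ x, ∑ y, p x y * (Real.log (p x y) - Real.log (prob X x) - Real.log (prob Y y))
      = ∑ x, ∑ y, p x y * Real.log (p x y)
        - ∑ x, ∑ y, p x y * Real.log (prob X x)
        - ∑ x, ∑ y, p x y * Real.log (prob Y y) := by
    simp only [mul_sub, Finset.sum_sub_distrib]
  rw [hexp] at this
  linarith

end Aux

universe u

/-- **Rate-distortion estimation error bound, lower bound** (paper, Theorem 2, lower bound).
Let `H'` be a conditionally independent copy of the history `H_T` given `θ`, i.e.
`I[H_T ; H' | θ] = 0` and `(θ, H')` has the same joint distribution as `(θ, H_T)`.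
Then `I[H_T ; θ | H'] ≤ I[H_T ; θ]` and `I[θ ; H'] = I[θ ; H_T]`.  Consequently, for every
`ε ≥ 0` with `I[H_T ; θ] < ε T`, the compression `θ̃ := H'` satisfies the distortion
constraint `I[H_T ; θ | θ̃] ≤ ε T` while having rate `I[θ ; θ̃] ≤ I[H_T ; θ]`; this yields
the lower bound `min{𝕀_{ε,T}(θ), ε T} ≤ I[H_T ; θ]` where `𝕀_{ε,T}(θ)` is the infimum of
`I[θ ; θ̃]` over compressions `θ̃` meeting these constraints. -/
theorem rate_distortion_lower_bound
    {Ω : Type*} [MeasureSpace Ω] [IsProbabilityMeasure (ℙ : Measure Ω)]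
    {𝒳 : Type u} {Θ : Type u} [Fintype 𝒳] [Nonempty 𝒳] [Fintype Θ] [Nonempty Θ]
    [MeasurableSpace 𝒳] [MeasurableSingletonClass 𝒳]
    [MeasurableSpace Θ] [MeasurableSingletonClass Θ]
    (T : ℕ) (hT : 1 ≤ T)
    (X : Fin T → Ω → 𝒳) (θ : Ω → Θ) (H' : Ω → (Fin T → 𝒳))
    (hX : ∀ t, Measurable (X t)) (hθ : Measurable θ) (hH' : Measurable H')
    (hCI : condMutualInfo (hist X T le_rfl) H' θ = 0)
    (hID : IdentDistrib (fun ω => (θ ω, H' ω)) (fun ω => (θ ω, hist X T le_rfl ω)) ℙ ℙ) :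
    condMutualInfo (hist X T le_rfl) θ H' ≤ mutualInfo (hist X T le_rfl) θ ∧
    mutualInfo θ H' = mutualInfo θ (hist X T le_rfl) ∧
    ∀ ε : ℝ, 0 ≤ ε → mutualInfo (hist X T le_rfl) θ < ε * T →
      (condMutualInfo (hist X T le_rfl) θ H' ≤ ε * T ∧
        mutualInfo θ H' ≤ mutualInfo (hist X T le_rfl) θ ∧
        min (sInf {r : ℝ | ∃ (Θ' : Type u) (_ : Fintype Θ') (θ' : Ω → Θ'),
            condMutualInfo (hist X T le_rfl) θ' θ = 0 ∧
            condMutualInfo (hist X T le_rfl) θ θ' ≤ ε * T ∧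
            r = mutualInfo θ θ'}) (ε * T)
          ≤ mutualInfo (hist X T le_rfl) θ) := by
  have hH : Measurable (hist X T le_rfl) :=
    measurable_pi_lambda _ (fun i => hX _)
  have e1 : entropy (fun ω => (θ ω, H' ω)) = entropy (fun ω => (θ ω, hist X T le_rfl ω)) :=
    entropy_identDistrib hID
  have e2 : entropy H' = entropy (hist X T le_rfl) :=
    entropy_identDistrib (show IdentDistrib H' (hist X T le_rfl) ℙ ℙ from
      hID.comp measurable_snd)
  have s1 : entropy (fun ω => (θ ω, hist X T le_rfl ω))
      = entropy (fun ω => (hist X T le_rfl ω, θ ω)) :=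
    entropy_comp_equiv (Equiv.prodComm _ _) (fun ω => (hist X T le_rfl ω, θ ω))
  have s2 : entropy (fun ω => (H' ω, θ ω)) = entropy (fun ω => (θ ω, H' ω)) :=
    entropy_comp_equiv (Equiv.prodComm _ _) (fun ω => (θ ω, H' ω))
  have t1 : entropy (fun ω => (hist X T le_rfl ω, θ ω, H' ω))
      = entropy (fun ω => (hist X T le_rfl ω, H' ω, θ ω)) :=
    entropy_comp_equiv ((Equiv.refl _).prodCongr (Equiv.prodComm _ _))
      (fun ω => (hist X T le_rfl ω, H' ω, θ ω))
  have sub1 : entropy (fun ω => (hist X T le_rfl ω, H' ω))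
      ≤ entropy (hist X T le_rfl) + entropy H' := mutualInfo_nonneg' hH hH'
  have sub2 : entropy (fun ω => (hist X T le_rfl ω, θ ω))
      ≤ entropy (hist X T le_rfl) + entropy θ := mutualInfo_nonneg' hH hθ
  simp only [condMutualInfo, mutualInfo] at hCI ⊢
  have g1 : entropy (fun ω => (hist X T le_rfl ω, H' ω)) + entropy (fun ω => (θ ω, H' ω))
      - entropy (fun ω => (hist X T le_rfl ω, θ ω, H' ω)) - entropy H'
      ≤ entropy (hist X T le_rfl) + entropy θ
        - entropy (fun ω => (hist X T le_rfl ω, θ ω)) := by linarith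
  refine ⟨g1, by linarith, ?_⟩
  intro ε hε hlt
  have g3 : entropy (fun ω => (hist X T le_rfl ω, H' ω)) + entropy (fun ω => (θ ω, H' ω))
      - entropy (fun ω => (hist X T le_rfl ω, θ ω, H' ω)) - entropy H' ≤ ε * T := by linarith
  refine ⟨g3, by linarith, ?_⟩
  have key : ∀ S : Set ℝ,
      (entropy θ + entropy H' - entropy (fun ω => (θ ω, H' ω))) ∈ S →
      min (sInf S) (ε * T) ≤ entropy (hist X T le_rfl) + entropy θ
        - entropy (fun ω => (hist X T le_rfl ω, θ ω)) := by
    intro S hmem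
    by_cases hbdd : BddBelow S
    · exact le_trans (min_le_left _ _) ((csInf_le hbdd hmem).trans (by linarith))
    · rw [Real.sInf_of_not_bddBelow hbdd, min_eq_left (mul_nonneg hε (Nat.cast_nonneg T))]
      linarith
  exact key _ ⟨Fin T → 𝒳, inferInstance, H', hCI, g3, rfl⟩
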